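/- Let X be a {−1,+1}-valued random variable and let Y_s and Y_t be two observations of X on the same probability space such that X − Y_s − Y_t forms a Markov chain (i.e., E[X | Y_s, Y_t] = E[X | Y_s] almost surely). Define H(X|W) := E[ h_b( (1 + E[X|W])/2 ) ] and mmse(X|W) := 1 − E[ (E[X|W])² ]. Then mmse(X | Y_t) − mmse(X | Y_s) ≤ 2·ln(2)·( H(X | Y_t) − H(X | Y_s) ). -/

import Mathlib

open MeasureTheory ProbabilityTheory

noncomputable section

/-- The binary entropy function (base 2). -/
def hb (p : ℝ) : ℝ := -(p * Real.logb 2 p) - (1 - p) * Real.logb 2 (1 - p)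

/-- Conditional expectation `E[X | W]` of `X` given the σ-algebra generated by `W`. -/
def condMean {Ω β E : Type*} [MeasurableSpace Ω] [MeasurableSpace β]
    [NormedAddCommGroup E] [NormedSpace ℝ E] [CompleteSpace E]
    (μ : Measure Ω) (X : Ω → E) (W : Ω → β) : Ω → E :=
  μ[X | MeasurableSpace.comap W inferInstance]

/-- Bit-error probability of the MAP decision rule for `X ∈ {±1}` given `W`. -/
def BER {Ω β : Type*} [MeasurableSpace Ω] [MeasurableSpace β]
    (μ : Measure Ω) (X : Ω → ℝ) (W : Ω → β) : ℝ :=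
  (1 - ∫ ω, |condMean μ X W ω| ∂μ) / 2

/-- Minimum mean squared error of estimating `X` from `W`. -/
def mmse {Ω β : Type*} [MeasurableSpace Ω] [MeasurableSpace β]
    (μ : Measure Ω) (X : Ω → ℝ) (W : Ω → β) : ℝ :=
  ∫ ω, (X ω - condMean μ X W ω) ^ 2 ∂μ

/-- Uniform distribution on `{-1, 1} ⊆ ℝ`. -/
def signMeasure : Measure ℝ := (2 : ENNReal)⁻¹ • (Measure.dirac (-1) + Measure.dirac 1)

/-- Capacity of the BMS channel (in multiplicative-noise form) with noise law `PZ`: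
`C = 1 - E[h_b((1 + E[X_u | Y_u])/2)]` where `X_u` is uniform on `{±1}`, independent of
`Z₀ ~ PZ`, and `Y_u = X_u · Z₀`. -/
def capacity (PZ : Measure ℝ) : ℝ :=
  1 - ∫ p, hb ((1 + condMean (signMeasure.prod PZ)
        (fun q : ℝ × ℝ => q.1) (fun q : ℝ × ℝ => q.1 * q.2) p) / 2) ∂(signMeasure.prod PZ)

/-- Evaluation vector of the multilinear polynomial whose coefficients on monomials
of degree at most `r` are given by `α` (higher-degree coefficients being ignored),
evaluated at the point `v ∈ 𝔽₂^m` with index `i = Σ_j v_j 2^j`. -/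
def RMword (r m : ℕ) (α : Finset (Fin m) → ZMod 2) : Fin (2 ^ m) → ZMod 2 :=
  fun i => ∑ S ∈ Finset.univ.filter (fun S : Finset (Fin m) => S.card ≤ r),
    α S * ∏ j ∈ S, ((((i : ℕ) / 2 ^ (j : ℕ)) % 2 : ℕ) : ZMod 2)

/-- The Reed–Muller code RM(r, m) ⊆ 𝔽₂^{2^m}. -/
def RMcode (r m : ℕ) : Finset (Fin (2 ^ m) → ZMod 2) :=
  Finset.image (RMword r m) Finset.univ

/-- The rate `R(r,m)` of RM(r,m). -/
def RMrate (r m : ℕ) : ℝ := (2 ^ m : ℝ)⁻¹ * ∑ i ∈ Finset.range (r + 1), (m.choose i : ℝ)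

/-- BPSK modulation map `c ↦ ((-1)^{c_0}, …, (-1)^{c_{N-1}})`. -/
def bpsk {N : ℕ} (c : Fin N → ZMod 2) : Fin N → ℝ := fun i => (-1 : ℝ) ^ ((c i).val)

/-- BPSK image of a binary code. -/
def bpskImage {N : ℕ} (C : Finset (Fin N → ZMod 2)) : Finset (Fin N → ℝ) :=
  letI := Classical.decEq (Fin N → ℝ)
  C.image bpsk

/-- BPSK image of RM(r,m). -/
def bpskRM (r m : ℕ) : Finset (Fin (2 ^ m) → ℝ) := bpskImage (RMcode r m)

/-- Uniform probability measure on a finite set. -/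
def uniformOnFinset {α : Type*} [MeasurableSpace α] (s : Finset α) : Measure α :=
  (s.card : ENNReal)⁻¹ • ∑ x ∈ s, Measure.dirac x

/-- `ρ(m) = (6 ln m + 34)/(5 √m)`. -/
def rho (m : ℕ) : ℝ := (6 * Real.log m + 34) / (5 * Real.sqrt m)

/-- Inverse of the binary entropy function restricted to `[0, 1/2]`. -/
def hbInv (u : ℝ) : ℝ := sSup {p : ℝ | p ∈ Set.Icc (0 : ℝ) (1 / 2) ∧ hb p ≤ u}

/-- `ψ(u) = 1 - (1 - 2 h_b^{-1}(u))²`. -/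
def psi (u : ℝ) : ℝ := 1 - (1 - 2 * hbInv u) ^ 2

/-- `Ψ(u) = ∫₀^u ψ(v) dv`. -/
def PsiInt (u : ℝ) : ℝ := ∫ v in (0 : ℝ)..u, psi v

/-- The coefficients `c_k = 1/(ln 2 · 2k (2k-1))`. -/
def ck (k : ℕ) : ℝ := 1 / (Real.log 2 * (2 * k) * (2 * k - 1))

/-- The channel moments `q_k = E[(E[X_u | Y_u])^{2k}]` for uniform input. -/
def qmom (PZ : Measure ℝ) (k : ℕ) : ℝ :=
  ∫ p, (condMean (signMeasure.prod PZ)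
      (fun q : ℝ × ℝ => q.1) (fun q : ℝ × ℝ => q.1 * q.2) p) ^ (2 * k) ∂(signMeasure.prod PZ)

end


open MeasureTheory ProbabilityTheory Real Set

noncomputable section JAux

/-- `G(x) = h((1+x)/2) + x²/2` with natural-log binary entropy `h`. -/
def Gfun (x : ℝ) : ℝ := Real.binEntropy ((1 + x) / 2) + x ^ 2 / 2

/-- The derivative of `Gfun` on `(-1,1)`. -/
def Phi (v : ℝ) : ℝ := (Real.log (1 - v) - Real.log (1 + v)) / 2 + v

lemma hasDerivAt_Gfun {v : ℝ} (hv : v ∈ Ioo (-1 : ℝ) 1) : HasDerivAt Gfun (Phi v) v := by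
  obtain ⟨h1, h2⟩ := hv
  have hp0 : (1 + v) / 2 ≠ 0 := by intro h; nlinarith [h]
  have hp1 : (1 + v) / 2 ≠ 1 := by intro h; nlinarith [h]
  have hlin : HasDerivAt (fun x : ℝ => (1 + x) / 2) (1 / 2) v := by
    simpa using ((hasDerivAt_id v).const_add 1).div_const 2
  have hbe := (Real.hasDerivAt_binEntropy hp0 hp1).comp v hlin
  have hsq : HasDerivAt (fun x : ℝ => x ^ 2 / 2) v v := by
    simpa using ((hasDerivAt_pow 2 v)).div_const 2
  have h := hbe.add hsq
  have hval : (Real.log (1 - (1 + v) / 2) - Real.log ((1 + v) / 2)) * (1 / 2) + v = Phi v := by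
    have e1 : 1 - (1 + v) / 2 = (1 - v) / 2 := by ring
    have h1v : (1 : ℝ) - v ≠ 0 := by intro h; nlinarith
    have h2v : (1 : ℝ) + v ≠ 0 := by intro h; nlinarith
    rw [e1, Real.log_div h1v two_ne_zero, Real.log_div h2v two_ne_zero, Phi]
    ring
  rw [← hval]
  exact h

lemma hasDerivAt_Phi {v : ℝ} (hv : v ∈ Ioo (-1 : ℝ) 1) :
    HasDerivAt Phi ((-(1 - v)⁻¹ - (1 + v)⁻¹) / 2 + 1) v := by
  obtain ⟨h1, h2⟩ := hv
  have h1v : (1 : ℝ) - v ≠ 0 := by intro h; nlinarith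
  have h2v : (1 : ℝ) + v ≠ 0 := by intro h; nlinarith
  have ha : HasDerivAt (fun x : ℝ => 1 - x) (-1) v := by
    simpa using ((hasDerivAt_id v).const_sub 1)
  have hb : HasDerivAt (fun x : ℝ => 1 + x) 1 v := by
    simpa using ((hasDerivAt_id v).const_add 1)
  have hla := (Real.hasDerivAt_log h1v).comp v ha
  have hlb := (Real.hasDerivAt_log h2v).comp v hb
  have h := (((hla.sub hlb)).div_const 2).add (hasDerivAt_id v)
  exact h.congr_deriv (by ring)

lemma antitoneOn_Phi : AntitoneOn Phi (Ioo (-1 : ℝ) 1) := by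
  have hint : interior (Ioo (-1 : ℝ) 1) = Ioo (-1 : ℝ) 1 := interior_Ioo
  refine antitoneOn_of_deriv_nonpos (convex_Ioo _ _) ?_ ?_ ?_
  · exact fun x hx => (hasDerivAt_Phi hx).continuousAt.continuousWithinAt
  · rw [hint]; exact fun x hx => (hasDerivAt_Phi hx).differentiableAt.differentiableWithinAt
  · rw [hint]
    intro x hx
    rw [(hasDerivAt_Phi hx).deriv]
    obtain ⟨h1, h2⟩ := hx
    have ha : (0:ℝ) < 1 - x := by linarith
    have hb : (0:ℝ) < 1 + x := by linarith
    have hab0 : 0 < (1-x)*(1+x) := mul_pos ha hb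
    have key : (2:ℝ) ≤ (1-x)⁻¹ + (1+x)⁻¹ := by
      rw [inv_add_inv ha.ne' hb.ne', le_div_iff₀ hab0]
      nlinarith [sq_nonneg x]
    linarith

lemma continuous_Gfun : Continuous Gfun := by
  unfold Gfun; fun_prop

/-- Tangent-line inequality: `Gfun` is concave on `[-1,1]` with tangent at interior `v`. -/
lemma Gfun_tangent {u v : ℝ} (hu : u ∈ Icc (-1 : ℝ) 1) (hv : v ∈ Ioo (-1 : ℝ) 1) :
    Gfun u ≤ Gfun v + Phi v * (u - v) := by
  rcases lt_trichotomy u v with h | h | h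
  · have hsub : Ioo u v ⊆ Ioo (-1 : ℝ) 1 := fun x hx =>
      ⟨lt_of_le_of_lt hu.1 hx.1, lt_trans hx.2 hv.2⟩
    obtain ⟨c, hc, hceq⟩ := exists_hasDerivAt_eq_slope Gfun Phi h
      (continuous_Gfun.continuousOn) (fun x hx => hasDerivAt_Gfun (hsub hx))
    have hcmem : c ∈ Ioo (-1 : ℝ) 1 := hsub hc
    have hPc : Phi v ≤ Phi c := antitoneOn_Phi hcmem hv hc.2.le
    rw [eq_div_iff (sub_ne_zero.mpr (ne_of_gt h))] at hceq
    nlinarith [mul_le_mul_of_nonneg_right hPc (by linarith : (0:ℝ) ≤ v - u)]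
  · subst h; simp
  · have hsub : Ioo v u ⊆ Ioo (-1 : ℝ) 1 := fun x hx =>
      ⟨lt_trans hv.1 hx.1, lt_of_lt_of_le hx.2 hu.2⟩
    obtain ⟨c, hc, hceq⟩ := exists_hasDerivAt_eq_slope Gfun Phi h
      (continuous_Gfun.continuousOn) (fun x hx => hasDerivAt_Gfun (hsub hx))
    have hcmem : c ∈ Ioo (-1 : ℝ) 1 := hsub hc
    have hPc : Phi c ≤ Phi v := antitoneOn_Phi hv hcmem hc.1.le
    rw [eq_div_iff (sub_ne_zero.mpr (ne_of_gt h))] at hceq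
    nlinarith [mul_le_mul_of_nonneg_right hPc (by linarith : (0:ℝ) ≤ u - v)]

/-- Bound on `|Phi|` on `[-c, c]` for `c < 1`. -/
def Mbd (c : ℝ) : ℝ := -Real.log (1 - c) + Real.log 2 + 1

lemma Mbd_nonneg {c : ℝ} (h0 : 0 ≤ c) (h1 : c < 1) : 0 ≤ Mbd c := by
  have : Real.log (1 - c) ≤ 0 := Real.log_nonpos (by linarith) (by linarith)
  have : (0:ℝ) ≤ Real.log 2 := Real.log_nonneg (by norm_num)
  unfold Mbd; linarith

lemma abs_log_le {c t : ℝ} (h0c : 0 ≤ c) (hc : c < 1) (h1 : 1 - c ≤ t) (h2 : t ≤ 2) :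
    |Real.log t| ≤ -Real.log (1 - c) + Real.log 2 := by
  have hcpos : (0:ℝ) < 1 - c := by linarith
  have htpos : (0:ℝ) < t := by linarith
  have hlog2 : (0:ℝ) ≤ Real.log 2 := Real.log_nonneg (by norm_num)
  rcases le_total 1 t with h | h
  · rw [abs_of_nonneg (Real.log_nonneg h)]
    have h3 := Real.log_le_log htpos h2
    have h4 : Real.log (1 - c) ≤ 0 := Real.log_nonpos (by linarith) (by linarith)
    linarith
  · rw [abs_of_nonpos (Real.log_nonpos htpos.le h)]
    have := Real.log_le_log hcpos h1
    linarith

lemma abs_Phi_le {c v : ℝ} (h0 : 0 ≤ c) (h1 : c < 1) (hv : |v| ≤ c) : |Phi v| ≤ Mbd c := by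
  have hv' := abs_le.mp hv
  have e1 : |Real.log (1 - v)| ≤ -Real.log (1 - c) + Real.log 2 :=
    abs_log_le h0 h1 (by linarith) (by linarith)
  have e2 : |Real.log (1 + v)| ≤ -Real.log (1 - c) + Real.log 2 :=
    abs_log_le h0 h1 (by linarith) (by linarith)
  have key : |Phi v| ≤ (|Real.log (1 - v)| + |Real.log (1 + v)|) / 2 + |v| := by
    have t1 := abs_add_le ((Real.log (1 - v) - Real.log (1 + v)) / 2) v
    have t2 := abs_add_le (Real.log (1 - v)) (-Real.log (1 + v))
    rw [← sub_eq_add_neg, abs_neg] at t2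
    have t3 : |(Real.log (1 - v) - Real.log (1 + v)) / 2|
        = |Real.log (1 - v) - Real.log (1 + v)| / 2 := by
      rw [abs_div]; norm_num
    unfold Phi
    rw [t3] at t1
    linarith
  unfold Mbd
  linarith

lemma measurable_Phi : Measurable Phi := by
  unfold Phi
  exact (((Real.measurable_log.comp (measurable_const.sub measurable_id)).sub
    (Real.measurable_log.comp (measurable_const.add measurable_id))).div_const 2).add measurable_id

end JAux

noncomputable section JKey

open MeasureTheory Real Set Filter

variable {Ω : Type*} {m m0 : MeasurableSpace Ω}

lemma integrable_comp_bdd (μ : @Measure Ω m0) [IsProbabilityMeasure μ] {W : Ω → ℝ}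
    (hW : AEStronglyMeasurable W μ) (hW1 : ∀ᵐ ω ∂μ, |W ω| ≤ 1) {φ : ℝ → ℝ}
    (hφ : Continuous φ) : Integrable (fun ω => φ (W ω)) μ := by
  obtain ⟨C, hC⟩ := (isCompact_Icc (a := (-1:ℝ)) (b := 1)).exists_bound_of_continuousOn
    hφ.continuousOn
  refine Integrable.mono' (integrable_const C) (hφ.comp_aestronglyMeasurable hW) ?_
  filter_upwards [hW1] with ω hω
  exact hC _ (abs_le.mp hω)

lemma jensen_key (hm : m ≤ m0) (μ : @Measure Ω m0) [IsProbabilityMeasure μ]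
    {U : Ω → ℝ} (hUi : Integrable U μ) (hU1 : ∀ᵐ ω ∂μ, |U ω| ≤ 1) :
    ∫ ω, Gfun (U ω) ∂μ ≤ ∫ ω, Gfun ((μ[U|m]) ω) ∂μ := by
  set V : Ω → ℝ := μ[U|m] with hVdef
  have hVsm : StronglyMeasurable[m] V := stronglyMeasurable_condExp
  have hVmbl : Measurable[m] V := hVsm.measurable
  have hVmbl0 : Measurable[m0] V := hVmbl.mono hm le_rfl
  have hVi : Integrable V μ := integrable_condExp
  have hV1 : ∀ᵐ ω ∂μ, |V ω| ≤ 1 := by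
    have := ae_bdd_condExp_of_ae_bdd (m := m) (μ := μ) (R := 1) (f := U) (by simpa using hU1)
    simpa using this
  -- boundary: on {s·V ≥ 1} (s = ±1), U = s a.e.
  have boundary : ∀ (s : ℝ), s = 1 ∨ s = -1 →
      ∀ᵐ ω ∂μ, 1 ≤ s * V ω → U ω = s := by
    intro s hs
    have hs1 : |s| = 1 := by rcases hs with h | h <;> simp [h]
    set B : Set Ω := {ω | 1 ≤ s * V ω} with hBdef
    have hBm : MeasurableSet[m] B := (hVmbl.const_mul s) measurableSet_Ici
    have hBm0 : MeasurableSet[m0] B := hm _ hBm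
    have hint : ∫ ω in B, U ω ∂μ = ∫ ω in B, V ω ∂μ := (setIntegral_condExp hm hUi hBm).symm
    have hnonneg : 0 ≤ᵐ[μ.restrict B] fun ω => 1 - s * U ω := by
      filter_upwards [ae_restrict_of_ae hU1] with ω hω
      have h2 : |s * U ω| ≤ 1 := by rw [abs_mul, hs1, one_mul]; exact hω
      have := (abs_le.mp h2).2
      simp only [Pi.zero_apply]
      linarith
    have hintB : ∫ ω in B, (1 - s * U ω) ∂μ ≤ 0 := by
      have e1 : ∫ ω in B, (1 - s * U ω) ∂μ = ∫ ω in B, (1 - s * V ω) ∂μ := by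
        rw [integral_sub (integrable_const 1).integrableOn ((hUi.const_mul s).integrableOn),
          integral_sub (integrable_const 1).integrableOn ((hVi.const_mul s).integrableOn),
          integral_const_mul, integral_const_mul, hint]
      rw [e1]
      refine integral_nonpos_of_ae ?_
      filter_upwards [ae_restrict_mem hBm0] with ω hω
      have : 1 ≤ s * V ω := hω
      simp only [Pi.zero_apply]
      linarith
    have hzero : (fun ω => 1 - s * U ω) =ᵐ[μ.restrict B] 0 := by
      refine (integral_eq_zero_iff_of_nonneg_ae hnonneg ?_).mp (le_antisymm hintB ?_)
      · exact ((integrable_const 1).sub (hUi.const_mul s)).integrableOn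
      · exact integral_nonneg_of_ae hnonneg
    filter_upwards [ae_imp_of_ae_restrict hzero] with ω hω h1
    have h2 : 1 - s * U ω = 0 := hω h1
    have hss : s * s = 1 := by rcases hs with h | h <;> rw [h] <;> norm_num
    have : s * U ω = 1 := by linarith
    calc U ω = s * s * U ω := by rw [hss]; ring
      _ = s * (s * U ω) := by ring
      _ = s := by rw [this]; ring
  have hB1 := boundary 1 (Or.inl rfl)
  have hBm1 := boundary (-1) (Or.inr rfl)
  have hUV : ∀ᵐ ω ∂μ, 1 ≤ |V ω| → U ω = V ω := by
    filter_upwards [hB1, hBm1, hV1] with ω h1 h2 h3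
    intro habs
    rcases abs_le.mp h3 with ⟨hl, hr⟩
    rcases le_abs.mp habs with h | h
    · have hv : V ω = 1 := le_antisymm hr h
      rw [hv]; exact h1 (by rw [hv]; norm_num)
    · have hv : V ω = -1 := le_antisymm (by linarith) hl
      rw [hv]; exact h2 (by rw [hv]; norm_num)
  -- the sets
  set S : Set Ω := {ω | |V ω| < 1} with hSdef
  have hSm0 : MeasurableSet S := (measurable_abs.comp hVmbl0) measurableSet_Iio
  set c : ℕ → ℝ := fun n => 1 - ((n : ℝ) + 2)⁻¹ with hcdef
  have hc0 : ∀ n, 0 ≤ c n := by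
    intro n
    have h1 : ((n:ℝ) + 2)⁻¹ ≤ 1 := by
      rw [inv_le_one_iff₀]; right; linarith [Nat.cast_nonneg (α := ℝ) n]
    simp only [hcdef]; linarith
  have hc1 : ∀ n, c n < 1 := by
    intro n
    have : (0:ℝ) < ((n:ℝ) + 2)⁻¹ := by positivity
    simp only [hcdef]; linarith
  set A : ℕ → Set Ω := fun n => {ω | |V ω| ≤ c n} with hAdef
  have hAm : ∀ n, MeasurableSet[m] (A n) := fun n => (measurable_abs.comp hVmbl) measurableSet_Iic
  have hAm0 : ∀ n, MeasurableSet[m0] (A n) := fun n => hm _ (hAm n)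
  have hAmono : Monotone A := by
    intro i j hij ω hω
    have hcij : c i ≤ c j := by
      simp only [hcdef]
      have : ((j:ℝ) + 2)⁻¹ ≤ ((i:ℝ) + 2)⁻¹ := by
        apply inv_anti₀ (by positivity)
        have : (i:ℝ) ≤ (j:ℝ) := Nat.cast_le.mpr hij
        linarith
      linarith
    exact le_trans hω hcij
  have hAunion : (⋃ n, A n) = S := by
    ext ω
    simp only [mem_iUnion, hAdef, hSdef, mem_setOf_eq]
    constructor
    · rintro ⟨n, hn⟩; exact lt_of_le_of_lt hn (hc1 n)
    · intro hω
      obtain ⟨n, hn⟩ := exists_nat_gt (1 - |V ω|)⁻¹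
      refine ⟨n, ?_⟩
      have hpos : (0:ℝ) < 1 - |V ω| := by linarith
      have h1 : ((n:ℝ) + 2)⁻¹ < 1 - |V ω| := by
        rw [inv_lt_comm₀ (by positivity) hpos]
        linarith
      simp only [hcdef]; linarith
  -- integrability of G compositions
  have hGU : Integrable (fun ω => Gfun (U ω)) μ := integrable_comp_bdd μ hUi.1 hU1 continuous_Gfun
  have hGV : Integrable (fun ω => Gfun (V ω)) μ := integrable_comp_bdd μ hVi.1 hV1 continuous_Gfun
  -- step: for each n, ∫_{A n} G(U) ≤ ∫_{A n} G(V)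
  have hstep : ∀ n, ∫ ω in A n, Gfun (U ω) ∂μ ≤ ∫ ω in A n, Gfun (V ω) ∂μ := by
    intro n
    set h : Ω → ℝ := (A n).indicator (fun ω => Phi (V ω)) with hhdef
    have hhsm : StronglyMeasurable[m] h :=
      ((measurable_Phi.comp hVmbl).stronglyMeasurable).indicator (hAm n)
    have hhbd : ∀ ω, ‖h ω‖ ≤ Mbd (c n) := by
      intro ω
      by_cases hω : ω ∈ A n
      · rw [hhdef, Set.indicator_of_mem hω, Real.norm_eq_abs]
        exact abs_Phi_le (hc0 n) (hc1 n) hω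
      · rw [hhdef, Set.indicator_of_notMem hω, norm_zero]
        exact Mbd_nonneg (hc0 n) (hc1 n)
    have hhmeas0 : AEStronglyMeasurable h μ := (hhsm.mono hm).aestronglyMeasurable
    have hhU : Integrable (fun ω => h ω * U ω) μ :=
      hUi.bdd_mul (c := Mbd (c n)) hhmeas0 (Filter.Eventually.of_forall hhbd)
    have hhV : Integrable (fun ω => h ω * V ω) μ :=
      hVi.bdd_mul (c := Mbd (c n)) hhmeas0 (Filter.Eventually.of_forall hhbd)
    have hpull : μ[h * U|m] =ᵐ[μ] h * μ[U|m] :=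
      condExp_stronglyMeasurable_mul_of_bound hm hhsm hUi (Mbd (c n))
        (Filter.Eventually.of_forall hhbd)
    have hzero : ∫ ω, h ω * U ω ∂μ = ∫ ω, h ω * V ω ∂μ := by
      have e1 : ∫ ω, (μ[h * U|m]) ω ∂μ = ∫ ω, (h * U) ω ∂μ := integral_condExp hm
      have e2 : ∫ ω, (μ[h * U|m]) ω ∂μ = ∫ ω, (h * μ[U|m]) ω ∂μ := integral_congr_ae hpull
      have := e1.symm.trans e2
      simpa only [Pi.mul_apply, ← hVdef] using this
    have hptwise : ∀ᵐ ω ∂μ, (A n).indicator (fun ω => Gfun (U ω)) ω ≤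
        (A n).indicator (fun ω => Gfun (V ω)) ω + (h ω * U ω - h ω * V ω) := by
      filter_upwards [hU1] with ω hω
      by_cases hmem : ω ∈ A n
      · rw [Set.indicator_of_mem hmem, Set.indicator_of_mem hmem, hhdef,
          Set.indicator_of_mem hmem]
        have habs : |V ω| < 1 := lt_of_le_of_lt hmem (hc1 n)
        have hvmem : V ω ∈ Ioo (-1:ℝ) 1 := abs_lt.mp habs
        have := Gfun_tangent (abs_le.mp hω) hvmem
        linarith [this]
      · rw [Set.indicator_of_notMem hmem, Set.indicator_of_notMem hmem, hhdef,
          Set.indicator_of_notMem hmem]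
        simp
    have hind_intU : Integrable ((A n).indicator (fun ω => Gfun (U ω))) μ :=
      hGU.indicator (hAm0 n)
    have hind_intV : Integrable ((A n).indicator (fun ω => Gfun (V ω))) μ :=
      hGV.indicator (hAm0 n)
    have hsub : Integrable (fun ω => h ω * U ω - h ω * V ω) μ := hhU.sub hhV
    have hmain : ∫ ω, (A n).indicator (fun ω => Gfun (U ω)) ω ∂μ ≤
        ∫ ω, ((A n).indicator (fun ω => Gfun (V ω)) ω + (h ω * U ω - h ω * V ω)) ∂μ :=
      integral_mono_ae hind_intU (hind_intV.add hsub) hptwise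
    rw [integral_add hind_intV hsub, integral_sub hhU hhV, hzero, sub_self,
      add_zero] at hmain
    rwa [integral_indicator (hAm0 n), integral_indicator (hAm0 n)] at hmain
  -- pass to the limit
  have hlimU := tendsto_setIntegral_of_monotone hAm0 hAmono
    (hGU.integrableOn (s := ⋃ n, A n))
  have hlimV := tendsto_setIntegral_of_monotone hAm0 hAmono
    (hGV.integrableOn (s := ⋃ n, A n))
  have hS_le : ∫ ω in S, Gfun (U ω) ∂μ ≤ ∫ ω in S, Gfun (V ω) ∂μ := by
    rw [← hAunion]
    exact le_of_tendsto_of_tendsto' hlimU hlimV hstep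
  have hSc : ∫ ω in Sᶜ, Gfun (U ω) ∂μ = ∫ ω in Sᶜ, Gfun (V ω) ∂μ := by
    apply integral_congr_ae
    filter_upwards [ae_restrict_of_ae hUV, ae_restrict_mem hSm0.compl] with ω h1 h2
    have : 1 ≤ |V ω| := not_lt.mp h2
    rw [h1 this]
  calc ∫ ω, Gfun (U ω) ∂μ
      = ∫ ω in S, Gfun (U ω) ∂μ + ∫ ω in Sᶜ, Gfun (U ω) ∂μ :=
        (integral_add_compl hSm0 hGU).symm
    _ ≤ ∫ ω in S, Gfun (V ω) ∂μ + ∫ ω in Sᶜ, Gfun (V ω) ∂μ := by rw [hSc]; linarith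
    _ = ∫ ω, Gfun (V ω) ∂μ := integral_add_compl hSm0 hGV

end JKey

/-- for `X ∈ {±1}` with degraded observations `X − Y_s − Y_t`
(expressed by `E[X | Y_s, Y_t] = E[X | Y_s]` a.s.), the difference in MMSE is bounded
by `2 ln 2` times the difference in conditional entropy. -/
theorem stmt_17 {Ω β γ : Type*} [MeasurableSpace Ω] [MeasurableSpace β] [MeasurableSpace γ]
    (μ : Measure Ω) [IsProbabilityMeasure μ]
    (X : Ω → ℝ) (hX : Measurable X) (hpm : ∀ ω, X ω = -1 ∨ X ω = 1)
    (Ys : Ω → β) (Yt : Ω → γ) (hYs : Measurable Ys) (hYt : Measurable Yt)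
    (hmarkov : condMean μ X (fun ω => (Ys ω, Yt ω)) =ᵐ[μ] condMean μ X Ys) :
    (1 - ∫ ω, (condMean μ X Yt ω) ^ 2 ∂μ) - (1 - ∫ ω, (condMean μ X Ys ω) ^ 2 ∂μ)
      ≤ 2 * Real.log 2 *
          ((∫ ω, hb ((1 + condMean μ X Yt ω) / 2) ∂μ)
            - ∫ ω, hb ((1 + condMean μ X Ys ω) / 2) ∂μ) := by
  classical
  simp only [condMean] at hmarkov ⊢
  set ms : MeasurableSpace Ω := MeasurableSpace.comap Ys inferInstance with hms_def
  set mt : MeasurableSpace Ω := MeasurableSpace.comap Yt inferInstance with hmt_def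
  set mst : MeasurableSpace Ω :=
    MeasurableSpace.comap (fun ω => (Ys ω, Yt ω)) inferInstance with hmst_def
  have hms : ms ≤ _ := hYs.comap_le
  have hmt : mt ≤ _ := hYt.comap_le
  have hmst : mst ≤ _ := (hYs.prodMk hYt).comap_le
  have hmt_le : mt ≤ mst := by
    rintro s ⟨t, ht, rfl⟩
    exact ⟨Prod.snd ⁻¹' t, measurable_snd ht, rfl⟩
  have hX1 : ∀ᵐ ω ∂μ, |X ω| ≤ 1 :=
    Filter.Eventually.of_forall fun ω => by rcases hpm ω with h | h <;> simp [h]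
  have hXi : Integrable X μ := by
    refine Integrable.mono' (integrable_const 1) hX.aestronglyMeasurable ?_
    filter_upwards [hX1] with ω hω
    simpa [Real.norm_eq_abs] using hω
  set U : Ω → ℝ := μ[X|ms] with hU_def
  have hUi : Integrable U μ := integrable_condExp
  have hU1 : ∀ᵐ ω ∂μ, |U ω| ≤ 1 := by
    have := ae_bdd_condExp_of_ae_bdd (m := ms) (μ := μ) (R := 1) (f := X) (by simpa using hX1)
    simpa using this
  set W : Ω → ℝ := μ[U|mt] with hW_def
  have hWi : Integrable W μ := integrable_condExp
  have hW1 : ∀ᵐ ω ∂μ, |W ω| ≤ 1 := by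
    have := ae_bdd_condExp_of_ae_bdd (m := mt) (μ := μ) (R := 1) (f := U) (by simpa using hU1)
    simpa using this
  -- the Markov property: `E[X|Y_t] = E[U|Y_t]` a.e.
  have hVt : (μ[X|mt]) =ᵐ[μ] W := by
    have h1 : μ[μ[X|mst]|mt] =ᵐ[μ] μ[X|mt] := condExp_condExp_of_le hmt_le hmst
    have h2 : μ[μ[X|mst]|mt] =ᵐ[μ] μ[μ[X|ms]|mt] := condExp_congr_ae hmarkov
    exact h1.symm.trans h2
  -- replace the `Y_t` conditional mean by `W` in the goal
  have hrw1 : ∫ ω, (μ[X|mt]) ω ^ 2 ∂μ = ∫ ω, (W ω) ^ 2 ∂μ :=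
    integral_congr_ae (hVt.mono fun ω h => by simp only [h])
  have hrw2 : ∫ ω, hb ((1 + (μ[X|mt]) ω) / 2) ∂μ = ∫ ω, hb ((1 + W ω) / 2) ∂μ :=
    integral_congr_ae (hVt.mono fun ω h => by simp only [h])
  rw [hrw1, hrw2]
  -- integrability facts
  have hbe_cont : Continuous fun x : ℝ => Real.binEntropy ((1 + x) / 2) := by fun_prop
  have hsq_cont : Continuous fun x : ℝ => x ^ 2 := by fun_prop
  have haU : Integrable (fun ω => Real.binEntropy ((1 + U ω) / 2)) μ :=
    integrable_comp_bdd μ hUi.1 hU1 hbe_cont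
  have haW : Integrable (fun ω => Real.binEntropy ((1 + W ω) / 2)) μ :=
    integrable_comp_bdd μ hWi.1 hW1 hbe_cont
  have hbU : Integrable (fun ω => (U ω) ^ 2) μ := integrable_comp_bdd μ hUi.1 hU1 hsq_cont
  have hbW : Integrable (fun ω => (W ω) ^ 2) μ := integrable_comp_bdd μ hWi.1 hW1 hsq_cont
  -- the key inequality
  have key : ∫ ω, Gfun (U ω) ∂μ ≤ ∫ ω, Gfun (W ω) ∂μ := jensen_key hmt μ hUi hU1
  have expandU : ∫ ω, Gfun (U ω) ∂μ
      = (∫ ω, Real.binEntropy ((1 + U ω) / 2) ∂μ) + (∫ ω, (U ω) ^ 2 ∂μ) / 2 := by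
    rw [show (fun ω => Gfun (U ω)) = fun ω =>
        Real.binEntropy ((1 + U ω) / 2) + (U ω) ^ 2 / 2 from rfl,
      integral_add haU (hbU.div_const 2), integral_div]
  have expandW : ∫ ω, Gfun (W ω) ∂μ
      = (∫ ω, Real.binEntropy ((1 + W ω) / 2) ∂μ) + (∫ ω, (W ω) ^ 2 ∂μ) / 2 := by
    rw [show (fun ω => Gfun (W ω)) = fun ω =>
        Real.binEntropy ((1 + W ω) / 2) + (W ω) ^ 2 / 2 from rfl,
      integral_add haW (hbW.div_const 2), integral_div]
  rw [expandU, expandW] at key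
  -- rewrite `hb` in terms of `binEntropy`
  have hb_eq : ∀ p : ℝ, hb p = Real.binEntropy p / Real.log 2 := by
    intro p
    simp only [hb, Real.binEntropy, Real.logb, Real.log_inv]
    ring
  have hbrwU : ∫ ω, hb ((1 + U ω) / 2) ∂μ
      = (∫ ω, Real.binEntropy ((1 + U ω) / 2) ∂μ) / Real.log 2 := by
    simp_rw [hb_eq]
    rw [integral_div]
  have hbrwW : ∫ ω, hb ((1 + W ω) / 2) ∂μ
      = (∫ ω, Real.binEntropy ((1 + W ω) / 2) ∂μ) / Real.log 2 := by
    simp_rw [hb_eq]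
    rw [integral_div]
  rw [hbrwU, hbrwW]
  have hlog : Real.log 2 ≠ 0 := ne_of_gt (Real.log_pos (by norm_num))
  set aU := ∫ ω, Real.binEntropy ((1 + U ω) / 2) ∂μ
  set aW := ∫ ω, Real.binEntropy ((1 + W ω) / 2) ∂μ
  set bU := ∫ ω, (U ω) ^ 2 ∂μ
  set bW := ∫ ω, (W ω) ^ 2 ∂μ
  have hfield : 2 * Real.log 2 * (aW / Real.log 2 - aU / Real.log 2) = 2 * (aW - aU) := by
    field_simp
  rw [hfield]
  linarith
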